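/- arXiv:2005.05637 — 2 statements merged into one kernel-verified Lean document; each statement's English description precedes it below -/
import Mathlib

section
/- Let λ : Q → Q' be a morphism of quivers. Define ξ : ℤ^{Q_0} × ℤ^{Q_0} → ℤ by ξ(d,e) = Σ_{v≠w ∈ Q_0 : λ_0(v)=λ_0(w)} d(v)e(w) + Σ_{a ∈ Q_1 : there is no a' ∈ Q_1' with (a,a') ∈ λ_1} d(t(a))e(h(a)). Then for all d,e ∈ ℤ^{Q_0}: χ_{Q'}(λ_*(d), λ_*(e)) = χ_Q(d,e) + ξ(d,e). -/
/-- A quiver: a finite directed graph with vertex set `V`, edge set `E`, and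
head and tail maps `h, t : E → V`. -/
structure QuiverData where
  V : Type
  E : Type
  [fV : Fintype V]
  [fE : Fintype E]
  [dV : DecidableEq V]
  [dE : DecidableEq E]
  h : E → V
  t : E → V

attribute [instance] QuiverData.fV QuiverData.fE QuiverData.dV QuiverData.dE

/-- A morphism of quivers `λ : Q → Q'`: a map `f0` on vertices together with a
relation `f1 ⊆ Q₁ × Q₁'` on edges, satisfying conditions (i)–(iii) of
Definition 5.6 of the paper. -/
structure QMor (Q Q' : QuiverData) where
  f0 : Q.V → Q'.V
  f1 : Set (Q.E × Q'.E)
  compat : ∀ p ∈ f1, f0 (Q.h p.1) = Q'.h p.2 ∧ f0 (Q.t p.1) = Q'.t p.2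
  lift : ∀ (v w : Q.V) (e' : Q'.E), f0 v = Q'.h e' → f0 w = Q'.t e' →
    ∃! e : Q.E, (e, e') ∈ f1 ∧ Q.h e = v ∧ Q.t e = w
  inj : ∀ p ∈ f1, ∀ q ∈ f1, p.1 = q.1 → p.2 = q.2

/-- Composition of relations. -/
def relComp {A B C : Type*} (r : Set (A × B)) (s : Set (B × C)) : Set (A × C) :=
  {p | ∃ b, (p.1, b) ∈ r ∧ (b, p.2) ∈ s}

/-- The diagonal relation. -/
def diagRel (A : Type*) : Set (A × A) := {p | p.1 = p.2}

open scoped Classical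

/-- The Euler form of the quiver `Q`. -/
def eulerForm (Q : QuiverData) (d e : Q.V → ℤ) : ℤ :=
  ∑ v, d v * e v - ∑ a : Q.E, d (Q.t a) * e (Q.h a)

/-- The pushforward of dimension vectors along a quiver morphism:
`λ_*(d)(v') = ∑_{v : λ₀(v) = v'} d(v)`. -/
noncomputable def pushDim {Q Q' : QuiverData} (l : QMor Q Q') (d : Q.V → ℤ) : Q'.V → ℤ :=
  fun v' => ∑ v ∈ Finset.univ.filter (fun v => l.f0 v = v'), d v

/-- The correction form `ξ` associated to a quiver morphism `λ`. -/
noncomputable def xiForm {Q Q' : QuiverData} (l : QMor Q Q') (d e : Q.V → ℤ) : ℤ :=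
  (∑ p ∈ Finset.univ.filter
      (fun p : Q.V × Q.V => p.1 ≠ p.2 ∧ l.f0 p.1 = l.f0 p.2), d p.1 * e p.2) +
  (∑ a ∈ Finset.univ.filter
      (fun a : Q.E => ¬ ∃ a' : Q'.E, (a, a') ∈ l.f1), d (Q.t a) * e (Q.h a))


open Finset in
lemma vertex_push {Q Q' : QuiverData} (l : QMor Q Q') (d e : Q.V → ℤ) :
    ∑ v' : Q'.V, pushDim l d v' * pushDim l e v' =
      (∑ v, d v * e v) +
      ∑ p ∈ Finset.univ.filter
        (fun p : Q.V × Q.V => p.1 ≠ p.2 ∧ l.f0 p.1 = l.f0 p.2), d p.1 * e p.2 := by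
  have key : ∑ v' : Q'.V, pushDim l d v' * pushDim l e v' =
      ∑ p ∈ Finset.univ.filter
        (fun p : Q.V × Q.V => l.f0 p.1 = l.f0 p.2), d p.1 * e p.2 := by
    simp only [pushDim, Finset.sum_mul_sum, sum_filter, Fintype.sum_prod_type,
      ite_mul, zero_mul, mul_ite, mul_zero]
    rw [Finset.sum_comm]
    refine Finset.sum_congr rfl fun v _ => ?_
    rw [Finset.sum_comm]
    refine Finset.sum_congr rfl fun w _ => ?_
    rcases eq_or_ne (l.f0 v) (l.f0 w) with h | h
    · rw [if_pos h, Finset.sum_eq_single (l.f0 v)]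
      · simp [← h]
      · intro b _ hb
        split_ifs with h1 h2 <;> first
          | rfl
          | (exact absurd h1.symm hb)
          | (exact absurd (h.trans h1).symm hb)
      · simp
    · rw [if_neg h]
      apply Finset.sum_eq_zero
      intro b _
      split_ifs with h1 h2 <;> first
        | rfl
        | (exact absurd (h1.trans h2.symm) h)
        | (exact absurd (h2.trans h1.symm) h)
  have diag : ∑ p ∈ Finset.univ.filter (fun p : Q.V × Q.V => p.1 = p.2),
      d p.1 * e p.2 = ∑ v, d v * e v := by
    simp only [sum_filter, Fintype.sum_prod_type]
    refine Finset.sum_congr rfl fun v _ => ?_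
    rw [Finset.sum_eq_single v] <;> simp +contextual [eq_comm]
  rw [key, ← Finset.sum_filter_add_sum_filter_not
      (Finset.univ.filter (fun p : Q.V × Q.V => l.f0 p.1 = l.f0 p.2))
      (fun p => p.1 = p.2)]
  congr 1
  · rw [← diag]
    congr 1
    ext p
    simp +contextual [and_comm, fun (h : p.1 = p.2) => (h ▸ rfl : l.f0 p.1 = l.f0 p.2)]
  · congr 1
    ext p
    simp [and_comm]

open Finset in
lemma edge_push {Q Q' : QuiverData} (l : QMor Q Q') (d e : Q.V → ℤ) :
    ∑ a' : Q'.E, pushDim l d (Q'.t a') * pushDim l e (Q'.h a') =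
      ∑ a ∈ Finset.univ.filter (fun a : Q.E => ∃ a' : Q'.E, (a, a') ∈ l.f1),
        d (Q.t a) * e (Q.h a) := by
  have key : ∑ a' : Q'.E, pushDim l d (Q'.t a') * pushDim l e (Q'.h a') =
      ∑ p ∈ Finset.univ.filter
        (fun p : Q'.E × Q.V × Q.V => l.f0 p.2.1 = Q'.t p.1 ∧ l.f0 p.2.2 = Q'.h p.1),
        d p.2.1 * e p.2.2 := by
    simp only [pushDim, Finset.sum_mul_sum, sum_filter, Fintype.sum_prod_type,
      ite_mul, zero_mul, mul_ite, mul_zero, ite_and]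
    refine Finset.sum_congr rfl fun a' _ => Finset.sum_congr rfl fun v _ =>
      Finset.sum_congr rfl fun w _ => ?_
    split_ifs <;> rfl
  rw [key]
  refine Finset.sum_bij' (fun p hp => ?_) (fun a ha => ?_) ?_ ?_ ?_ ?_ ?_
  · -- i : triple → edge
    have h := (Finset.mem_filter.mp hp).2
    exact (l.lift p.2.2 p.2.1 p.1 h.2 h.1).exists.choose
  · -- j : edge → triple
    have h := (Finset.mem_filter.mp ha).2
    exact (h.choose, (Q.t a, Q.h a))
  · intro p hp
    have h := (Finset.mem_filter.mp hp).2
    have hs := (l.lift p.2.2 p.2.1 p.1 h.2 h.1).exists.choose_spec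
    exact Finset.mem_filter.mpr ⟨Finset.mem_univ _, ⟨p.1, hs.1⟩⟩
  · intro a ha
    have h := (Finset.mem_filter.mp ha).2
    have hs := h.choose_spec
    have hc := l.compat _ hs
    exact Finset.mem_filter.mpr ⟨Finset.mem_univ _, hc.2, hc.1⟩
  · -- left inverse : j (i p) = p
    intro p hp
    have h := (Finset.mem_filter.mp hp).2
    have hs := (l.lift p.2.2 p.2.1 p.1 h.2 h.1).exists.choose_spec
    set a := (l.lift p.2.2 p.2.1 p.1 h.2 h.1).exists.choose with ha
    have hmem : a ∈ Finset.univ.filter (fun a : Q.E => ∃ a' : Q'.E, (a, a') ∈ l.f1) :=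
      Finset.mem_filter.mpr ⟨Finset.mem_univ _, ⟨p.1, hs.1⟩⟩
    have h2 := (Finset.mem_filter.mp hmem).2
    have : h2.choose = p.1 := l.inj (a, h2.choose) h2.choose_spec (a, p.1) hs.1 rfl
    refine Prod.ext ?_ ?_
    · exact this
    · exact Prod.ext hs.2.2 hs.2.1
  · -- right inverse : i (j a) = a
    intro a ha
    have h := (Finset.mem_filter.mp ha).2
    have hs := h.choose_spec
    have hc := l.compat _ hs
    have hmem : (h.choose, (Q.t a, Q.h a)) ∈ Finset.univ.filter
        (fun p : Q'.E × Q.V × Q.V => l.f0 p.2.1 = Q'.t p.1 ∧ l.f0 p.2.2 = Q'.h p.1) :=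
      Finset.mem_filter.mpr ⟨Finset.mem_univ _, hc.2, hc.1⟩
    have h2 := (Finset.mem_filter.mp hmem).2
    exact ((l.lift (Q.h a) (Q.t a) h.choose h2.2 h2.1).unique
      (l.lift (Q.h a) (Q.t a) h.choose h2.2 h2.1).exists.choose_spec
      ⟨hs, rfl, rfl⟩)
  · intro p hp
    have h := (Finset.mem_filter.mp hp).2
    have hs := (l.lift p.2.2 p.2.1 p.1 h.2 h.1).exists.choose_spec
    rw [hs.2.2, hs.2.1]

/-- For a morphism of quivers `λ : Q → Q'` and all
`d, e ∈ ℤ^{Q₀}`: `χ_{Q'}(λ_* d, λ_* e) = χ_Q(d, e) + ξ(d, e)`. -/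
theorem eulerForm_push {Q Q' : QuiverData} (l : QMor Q Q') (d e : Q.V → ℤ) :
    eulerForm Q' (pushDim l d) (pushDim l e) = eulerForm Q d e + xiForm l d e := by
  unfold eulerForm xiForm
  rw [vertex_push l d e, edge_push l d e,
    ← Finset.sum_filter_add_sum_filter_not Finset.univ
      (fun a : Q.E => ∃ a' : Q'.E, (a, a') ∈ l.f1)
      (fun a => d (Q.t a) * e (Q.h a))]
  ring
end

section
/- Let Q be a quiver, (μ_v)_{v∈Q_0} real constants with associated slope function μ, and d ∈ ℕ^{Q_0}∖{0}. For ε > 0 define μ̃_±^ε on ℕ^{Q_0}×ℕ ∖ {(0,0)} by μ̃_±^ε(e,m) = (Σ_{v∈Q_0} μ_v e(v) + m(μ(d) ± ε))/(Σ_{v∈Q_0} e(v) + m). Then there exists ε_0 > 0 such that for all ε with 0 < ε < ε_0 the following hold: (a) μ̃_±^ε(e,0) = μ(e) for all e ∈ ℕ^{Q_0}∖{0}; (b) for all e,f ∈ ℕ^{Q_0}∖{0} with e+f = d and μ(e) < μ(f): μ̃_+^ε(e,0) < μ̃_+^ε(f,1), μ̃_+^ε(e,1) < μ̃_+^ε(f,0),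 μ̃_−^ε(e,0) < μ̃_−^ε(f,1), and μ̃_−^ε(e,1) < μ̃_−^ε(f,0); (c) for all e,f ∈ ℕ^{Q_0}∖{0} with e+f = d and μ(e) = μ(f): μ̃_+^ε(e,0) < μ̃_+^ε(f,1) and μ̃_−^ε(e,1) < μ̃_−^ε(f,0); (d) μ̃_+^ε(0,1) > μ(d) and μ̃_−^ε(0,1) < μ(d). -/
/-- The slope of a dimension vector `e` with respect to constants `μc`. -/
noncomputable def slopeFn {Q : QuiverData} (μc : Q.V → ℝ) (e : Q.V → ℕ) : ℝ :=
  (∑ v, μc v * (e v : ℝ)) / (∑ v, (e v : ℝ))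

/-- The slope on the extended quiver `Q̃` (one extra vertex `∞` with slope constant
`c`), evaluated at the dimension vector which equals `e` on `Q₀` and `m` at `∞`:
`μ̃(e,m) = (∑_v μc v · e v + m·c) / (∑_v e v + m)`. -/
noncomputable def slopeExt {Q : QuiverData} (μc : Q.V → ℝ) (c : ℝ) (e : Q.V → ℕ) (m : ℕ) : ℝ :=
  ((∑ v, μc v * (e v : ℝ)) + m * c) / ((∑ v, (e v : ℝ)) + m)

private lemma sumPosAux {Q : QuiverData} (e : Q.V → ℕ) (he : e ≠ 0) :
    0 < ∑ v, (e v : ℝ) := by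
  obtain ⟨v, hv⟩ : ∃ v, e v ≠ 0 := by
    by_contra h; push_neg at h; exact he (funext h)
  refine Finset.sum_pos' (fun i _ => by positivity) ⟨v, Finset.mem_univ v, ?_⟩
  exact_mod_cast Nat.pos_of_ne_zero hv

/-- For a quiver `Q`, slope constants `(μ_v)`, and
`d ∈ ℕ^{Q₀}∖{0}`, there is `ε₀ > 0` such that for all `0 < ε < ε₀` the perturbed
pair slope functions `μ̃±^ε` (slope `μ(d) ± ε` at the extra vertex `∞`) satisfy
properties (a)–(d). -/
theorem pair_slope_properties (Q : QuiverData) (μc : Q.V → ℝ)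
    (d : Q.V → ℕ) (hd : d ≠ 0) :
    ∃ ε₀ : ℝ, 0 < ε₀ ∧ ∀ ε : ℝ, 0 < ε → ε < ε₀ →
      -- (a)
      ((∀ e : Q.V → ℕ, e ≠ 0 →
          slopeExt μc (slopeFn μc d + ε) e 0 = slopeFn μc e ∧
          slopeExt μc (slopeFn μc d - ε) e 0 = slopeFn μc e) ∧
      -- (b)
      (∀ e f : Q.V → ℕ, e ≠ 0 → f ≠ 0 → e + f = d →
          slopeFn μc e < slopeFn μc f →
          slopeExt μc (slopeFn μc d + ε) e 0 < slopeExt μc (slopeFn μc d + ε) f 1 ∧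
          slopeExt μc (slopeFn μc d + ε) e 1 < slopeExt μc (slopeFn μc d + ε) f 0 ∧
          slopeExt μc (slopeFn μc d - ε) e 0 < slopeExt μc (slopeFn μc d - ε) f 1 ∧
          slopeExt μc (slopeFn μc d - ε) e 1 < slopeExt μc (slopeFn μc d - ε) f 0) ∧
      -- (c)
      (∀ e f : Q.V → ℕ, e ≠ 0 → f ≠ 0 → e + f = d →
          slopeFn μc e = slopeFn μc f →
          slopeExt μc (slopeFn μc d + ε) e 0 < slopeExt μc (slopeFn μc d + ε) f 1 ∧
          slopeExt μc (slopeFn μc d - ε) e 1 < slopeExt μc (slopeFn μc d - ε) f 0) ∧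
      -- (d)
      (slopeFn μc d < slopeExt μc (slopeFn μc d + ε) 0 1 ∧
        slopeExt μc (slopeFn μc d - ε) 0 1 < slopeFn μc d)) := by
  classical
  obtain ⟨ε₀, hpos, hbound⟩ : ∃ ε₀ : ℝ, 0 < ε₀ ∧ ∀ e : Q.V → ℕ, e ≤ d →
      slopeFn μc e ≠ slopeFn μc d → ε₀ ≤ |slopeFn μc d - slopeFn μc e| := by
    set S := (Finset.Icc (0 : Q.V → ℕ) d).filter
      (fun e => slopeFn μc e ≠ slopeFn μc d) with hS
    refine ⟨(insert (1:ℝ) (S.image fun e => |slopeFn μc d - slopeFn μc e|)).min'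
      (Finset.insert_nonempty _ _), ?_, ?_⟩
    · rw [Finset.lt_min'_iff]
      intro b hb
      rcases Finset.mem_insert.mp hb with rfl | hb
      · norm_num
      · obtain ⟨e, he, rfl⟩ := Finset.mem_image.mp hb
        have hne := (Finset.mem_filter.mp he).2
        exact abs_pos.mpr (sub_ne_zero.mpr (Ne.symm hne))
    · intro e hle hne
      apply Finset.min'_le
      exact Finset.mem_insert_of_mem (Finset.mem_image_of_mem _
        (Finset.mem_filter.mpr ⟨Finset.mem_Icc.mpr ⟨Pi.le_def.mpr fun v => Nat.zero_le _, hle⟩, hne⟩))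
  refine ⟨ε₀, hpos, ?_⟩
  intro ε hε hεlt
  refine ⟨?_, ?_, ?_, ?_⟩
  · intro e he
    constructor <;> simp [slopeExt, slopeFn]
  · intro e f he hf hef hlt
    have hNe := sumPosAux e he
    have hNf := sumPosAux f hf
    have hle : e ≤ d := Pi.le_def.mpr fun v => by
      rw [← hef]; exact Nat.le_add_right _ _
    have hlf : f ≤ d := Pi.le_def.mpr fun v => by
      rw [← hef]; exact Nat.le_add_left _ _
    have hsd : (∑ v, μc v * (d v : ℝ)) =
        (∑ v, μc v * (e v : ℝ)) + ∑ v, μc v * (f v : ℝ) := by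
      rw [← hef]; simp only [Pi.add_apply, Nat.cast_add, mul_add]
      rw [Finset.sum_add_distrib]
    have hnd : (∑ v, (d v : ℝ)) = (∑ v, (e v : ℝ)) + ∑ v, (f v : ℝ) := by
      rw [← hef]; simp only [Pi.add_apply, Nat.cast_add]
      rw [Finset.sum_add_distrib]
    simp only [slopeFn] at hlt
    have hlt' := (div_lt_div_iff₀ hNe hNf).mp hlt
    have hd1 : (∑ v, μc v * (e v : ℝ)) / (∑ v, (e v : ℝ)) <
        (∑ v, μc v * (d v : ℝ)) / (∑ v, (d v : ℝ)) := by
      rw [hsd, hnd, div_lt_div_iff₀ hNe (by linarith)]; nlinarith [hlt']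
    have hd2 : (∑ v, μc v * (d v : ℝ)) / (∑ v, (d v : ℝ)) <
        (∑ v, μc v * (f v : ℝ)) / (∑ v, (f v : ℝ)) := by
      rw [hsd, hnd, div_lt_div_iff₀ (by linarith) hNf]; nlinarith [hlt']
    have hbe : ε < (∑ v, μc v * (d v : ℝ)) / (∑ v, (d v : ℝ)) -
        (∑ v, μc v * (e v : ℝ)) / (∑ v, (e v : ℝ)) := by
      have h := hbound e hle (by simp only [slopeFn]; exact ne_of_lt hd1)
      simp only [slopeFn] at h
      rw [abs_of_pos (by linarith)] at h
      linarith
    have hbf : ε < (∑ v, μc v * (f v : ℝ)) / (∑ v, (f v : ℝ)) -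
        (∑ v, μc v * (d v : ℝ)) / (∑ v, (d v : ℝ)) := by
      have h := hbound f hlf (by simp only [slopeFn]; exact (ne_of_lt hd2).symm)
      simp only [slopeFn] at h
      rw [abs_of_neg (by linarith)] at h
      linarith
    have hPe : (∑ v, μc v * (e v : ℝ)) <
        ((∑ v, μc v * (d v : ℝ)) / (∑ v, (d v : ℝ)) - ε) * (∑ v, (e v : ℝ)) :=
      (div_lt_iff₀ hNe).mp (by linarith)
    have hPf : ((∑ v, μc v * (d v : ℝ)) / (∑ v, (d v : ℝ)) + ε) * (∑ v, (f v : ℝ)) <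
        (∑ v, μc v * (f v : ℝ)) :=
      (lt_div_iff₀ hNf).mp (by linarith)
    simp only [slopeExt, slopeFn, Nat.cast_zero, Nat.cast_one, zero_mul, add_zero, one_mul]
    refine ⟨?_, ?_, ?_, ?_⟩
    · rw [div_lt_div_iff₀ hNe (by linarith)]
      nlinarith [hlt', hPe, mul_pos hε hNe]
    · rw [div_lt_div_iff₀ (by linarith) hNf]
      nlinarith [hlt', hPf, mul_pos hε hNf]
    · rw [div_lt_div_iff₀ hNe (by linarith)]
      nlinarith [hlt', hPe]
    · rw [div_lt_div_iff₀ (by linarith) hNf]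
      nlinarith [hlt', hPf]
  · intro e f he hf hef heq
    have hNe := sumPosAux e he
    have hNf := sumPosAux f hf
    have hsd : (∑ v, μc v * (d v : ℝ)) =
        (∑ v, μc v * (e v : ℝ)) + ∑ v, μc v * (f v : ℝ) := by
      rw [← hef]; simp only [Pi.add_apply, Nat.cast_add, mul_add]
      rw [Finset.sum_add_distrib]
    have hnd : (∑ v, (d v : ℝ)) = (∑ v, (e v : ℝ)) + ∑ v, (f v : ℝ) := by
      rw [← hef]; simp only [Pi.add_apply, Nat.cast_add]
      rw [Finset.sum_add_distrib]
    simp only [slopeFn] at heq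
    have heq' := (div_eq_div_iff hNe.ne' hNf.ne').mp heq
    have hde : (∑ v, μc v * (d v : ℝ)) / (∑ v, (d v : ℝ)) * (∑ v, (e v : ℝ)) =
        (∑ v, μc v * (e v : ℝ)) := by
      rw [hsd, hnd, div_mul_eq_mul_div, div_eq_iff (by positivity : (∑ v, (e v:ℝ)) + (∑ v, (f v:ℝ)) ≠ 0)]
      linear_combination -heq'
    have hdf : (∑ v, μc v * (d v : ℝ)) / (∑ v, (d v : ℝ)) * (∑ v, (f v : ℝ)) =
        (∑ v, μc v * (f v : ℝ)) := by
      rw [hsd, hnd, div_mul_eq_mul_div, div_eq_iff (by positivity : (∑ v, (e v:ℝ)) + (∑ v, (f v:ℝ)) ≠ 0)]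
      linear_combination heq'
    simp only [slopeExt, slopeFn, Nat.cast_zero, Nat.cast_one, zero_mul, add_zero, one_mul]
    constructor
    · rw [div_lt_div_iff₀ hNe (by linarith)]
      nlinarith [heq', hde, mul_pos hε hNe]
    · rw [div_lt_div_iff₀ (by linarith) hNf]
      nlinarith [heq', hdf, mul_pos hε hNf]
  · constructor <;> · simp [slopeExt]; linarith
end
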